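/- Let M be an E-GCM whose associated matrix A = 2I − M is nonnegative and whose graph is connected, and suppose there exists a positive vector ν with Aν = ρν for some ρ ≥ 2. Then from any position λ with νᵀλ > 0 from which some node can be legally fired, every game sequence is infinite (the numbers game never terminates). -/

import Mathlib

/-- Firing node `i` from position `lam` in the numbers game on matrix `M`. -/
def fireR {n : ℕ} (M : Matrix (Fin n) (Fin n) ℝ) (i : Fin n) (lam : Fin n → ℝ) :
    Fin n → ℝ :=
  fun j => lam j - M i j * lam i

/-- Legality of a firing sequence. -/
def legalSeqR {n : ℕ} (M : Matrix (Fin n) (Fin n) ℝ) :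
    (Fin n → ℝ) → List (Fin n) → Prop
  | _, [] => True
  | lam, i :: s => 0 < lam i ∧ legalSeqR M (fireR M i lam) s

/-- Resulting position of a firing sequence. -/
def playSeqR {n : ℕ} (M : Matrix (Fin n) (Fin n) ℝ) :
    (Fin n → ℝ) → List (Fin n) → (Fin n → ℝ)
  | lam, [] => lam
  | lam, i :: s => playSeqR M (fireR M i lam) s

/-- Let `M` be an E-GCM whose associated matrix `A = 2I − M` is nonnegative with
connected graph, and suppose there is a positive vector `ν` with `Aν = ρν` for
some `ρ ≥ 2`.  Then from any position `λ` with `νᵀλ > 0` from which some node can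
be legally fired, the numbers game never terminates: after any legal firing
sequence some coordinate remains positive. -/
theorem stmt19 {n : ℕ} (M A : Matrix (Fin n) (Fin n) ℝ)
    (hA : A = 2 • (1 : Matrix (Fin n) (Fin n) ℝ) - M)
    (hnn : ∀ i j, 0 ≤ A i j)
    (hconn : (SimpleGraph.fromRel (fun i j => A i j ≠ 0)).Connected)
    (ν : Fin n → ℝ) (hν : ∀ i, 0 < ν i)
    (ρ : ℝ) (hρ : 2 ≤ ρ) (heig : A.mulVec ν = ρ • ν)
    (lam : Fin n → ℝ) (hpos : 0 < dotProduct ν lam)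
    (hfire : ∃ i, 0 < lam i) :
    ∀ s : List (Fin n), legalSeqR M lam s → ∃ j, 0 < playSeqR M lam s j := by
  -- Invariant: ν⬝λ stays positive under legal firing
  have key : ∀ (lam : Fin n → ℝ) (i : Fin n), 0 < lam i →
      0 < dotProduct ν lam → 0 < dotProduct ν (fireR M i lam) := by
    intro lam i hi hp
    have hM : ∑ j, M i j * ν j = (2 - ρ) * ν i := by
      have h1 : (M.mulVec ν) i = ∑ j, M i j * ν j := by
        simp [Matrix.mulVec, dotProduct]
      have h2 : M = 2 • (1 : Matrix (Fin n) (Fin n) ℝ) - A := by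
        rw [hA]; ring_nf; abel
      have h3 : M.mulVec ν = (2 : ℝ) • ν - ρ • ν := by
        rw [h2, Matrix.sub_mulVec, heig]
        congr 1
        ext j
        simp [Matrix.mulVec, dotProduct, Matrix.one_apply, Finset.mul_sum]
      rw [← h1, h3]
      simp
      ring
    have : dotProduct ν (fireR M i lam)
        = dotProduct ν lam + (ρ - 2) * lam i * ν i := by
      simp only [dotProduct, fireR, mul_sub, Finset.sum_sub_distrib]
      have : ∑ j, ν j * (M i j * lam i) = ((2 - ρ) * ν i) * lam i := by
        rw [← hM, Finset.sum_mul]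
        congr 1; ext j; ring
      rw [this]; ring
    rw [this]
    nlinarith [hν i, mul_pos hi (hν i)]
  have exj : ∀ lam : Fin n → ℝ, 0 < dotProduct ν lam → ∃ j, 0 < lam j := by
    intro lam hp
    by_contra h
    push_neg at h
    have : dotProduct ν lam ≤ 0 := by
      apply Finset.sum_nonpos
      intro j _
      exact mul_nonpos_of_nonneg_of_nonpos (hν j).le (h j)
    linarith
  clear hfire
  intro s
  induction s generalizing lam with
  | nil => intro _; exact exj lam hpos
  | cons i s ih =>
    intro hleg
    obtain ⟨hi, hleg'⟩ := hleg
    exact ih (fireR M i lam) (key lam i hi hpos) hleg'
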